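/- Let π ∈ I_n(3412). Then the number of occurrences of the consecutive pattern 132 in π (indices i with π_i < π_{i+2} < π_{i+1}) equals the total number of occurrences in the Motzkin path Ψ(π) of the two-letter factors DU and HU. -/

import Mathlib

open scoped Classical

noncomputable section

/-- Steps of a Motzkin path: up, down, horizontal. -/
inductive Step : Type
  | U : Step
  | D : Step
  | H : Step
  deriving DecidableEq

/-- Steps of a bicolored Motzkin path: up, down, horizontal of color `c₁`,
horizontal of color `c₂`. -/
inductive CStep : Type
  | U : CStep
  | D : CStep
  | H : CStep
  | Ht : CStep
  deriving DecidableEq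

/-- A word over `{U,D,H}` is a Motzkin word if the numbers of `U`'s and `D`'s agree
and every prefix has at least as many `U`'s as `D`'s. -/
def IsMotzkin (w : List Step) : Prop :=
  w.count Step.U = w.count Step.D ∧
  ∀ k, (w.take k).count Step.D ≤ (w.take k).count Step.U

/-- The `y`-coordinate of the lattice point reached after the first `i` steps. -/
def levelAt (w : List Step) (i : ℕ) : ℕ :=
  (w.take i).count Step.U - (w.take i).count Step.D

/-- The height of the `i`-th step (0-indexed): the `y`-coordinate of its ending
point for a down step, of its starting point otherwise. -/
def heightAt (w : List Step) (i : ℕ) : ℕ :=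
  if w.getD i Step.H = Step.D then levelAt w (i + 1) else levelAt w i

/-- Twice the area between the path and the `x`-axis (trapezoid rule). -/
def twoArea (w : List Step) : ℕ :=
  ∑ i ∈ Finset.range w.length, (levelAt w i + levelAt w (i + 1))

/-- The number of occurrences of `p` as a factor (subword of consecutive letters) of `w`. -/
def occFactor (p w : List Step) : ℕ :=
  ((Finset.range w.length).filter fun i => p <+: w.drop i).card

/-- The `y`-coordinate reached after `i` steps, bicolored version. -/
def cLevelAt (w : List CStep) (i : ℕ) : ℕ :=
  (w.take i).count CStep.U - (w.take i).count CStep.D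

/-- The height of the `i`-th step, bicolored version. -/
def cHeightAt (w : List CStep) (i : ℕ) : ℕ :=
  if w.getD i CStep.H = CStep.D then cLevelAt w (i + 1) else cLevelAt w i

/-- A bicolored Motzkin word: a Motzkin word whose horizontal steps have two possible
colors (`H` and `Ht`), horizontal steps at height `0` not being allowed to have the
second color. -/
def IsBicoloredMotzkin (w : List CStep) : Prop :=
  w.count CStep.U = w.count CStep.D ∧
  (∀ k, (w.take k).count CStep.D ≤ (w.take k).count CStep.U) ∧
  (∀ i < w.length, w.getD i CStep.H = CStep.Ht → cHeightAt w i ≠ 0)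

/-- A histoire de Laguerre of length `n`: a bicolored Motzkin path of length `n`
together with a sequence `l` of nonnegative integers such that `l i ≤ h i` for each
step, the inequality being strict for the horizontal steps of the second color
(the "suitable constraints" of De Medicis and Viennot). -/
def IsLaguerre (n : ℕ) (dl : List CStep × List ℕ) : Prop :=
  dl.1.length = n ∧ dl.2.length = n ∧ IsBicoloredMotzkin dl.1 ∧
  ∀ i < n, dl.2.getD i 0 ≤ cHeightAt dl.1 i ∧
    (dl.1.getD i CStep.H = CStep.Ht → dl.2.getD i 0 < cHeightAt dl.1 i)

/-- A labelled Motzkin path of length `n`: a Motzkin path whose down steps carry a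
label not exceeding their height, all other steps carrying the label `0` (unlabelled). -/
def IsLabelledMotzkin (n : ℕ) (dl : List Step × List ℕ) : Prop :=
  dl.1.length = n ∧ dl.2.length = n ∧ IsMotzkin dl.1 ∧
  ∀ i < n, (dl.1.getD i Step.H = Step.D → dl.2.getD i 0 ≤ heightAt dl.1 i) ∧
    (dl.1.getD i Step.H ≠ Step.D → dl.2.getD i 0 = 0)

/-- The embedding of plain Motzkin steps into bicolored steps. -/
def Step.toC : Step → CStep
  | Step.U => CStep.U
  | Step.D => CStep.D
  | Step.H => CStep.H

/-- The value (as a natural number, 0-indexed) of the permutation `π` at the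
(0-indexed) position `i`; junk value `0` out of range. -/
def pv {n : ℕ} (π : Equiv.Perm (Fin n)) (i : ℕ) : ℕ :=
  if h : i < n then (π ⟨i, h⟩ : Fin n).val else 0

/-- Position `p` starts an ascending run of `π` (in one-line notation):
either `p = 0` or there is a descent just before `p`. -/
def RunStartAt {n : ℕ} (π : Equiv.Perm (Fin n)) (p : Fin n) : Prop :=
  ∀ q : Fin n, (q : ℕ) + 1 = (p : ℕ) → π p < π q

/-- Position `p` ends an ascending run of `π`. -/
def RunEndAt {n : ℕ} (π : Equiv.Perm (Fin n)) (p : Fin n) : Prop :=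
  ∀ q : Fin n, (p : ℕ) + 1 = (q : ℕ) → π q < π p

/-- The step of the bicolored Motzkin path `Γ(π)` associated with the value `v`:
`U` if `v` is a head, `D` if it is a tail, `H` if it is a head-tail, `Ht` if it
is a boarder. -/
def gammaStep {n : ℕ} (π : Equiv.Perm (Fin n)) (v : Fin n) : CStep :=
  if RunStartAt π (π.symm v) then
    if RunEndAt π (π.symm v) then CStep.H else CStep.U
  else
    if RunEndAt π (π.symm v) then CStep.D else CStep.Ht

/-- The label of `Γ(π)` at the value `v`: the number of ascending runs of `π`
(determined by the position `pq.1` of their first element and the position `pq.2`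
of their last element) whose first value is `< v`, whose last value is `> v`, and
whose last element precedes `v` in `π`. -/
def gammaLabel {n : ℕ} (π : Equiv.Perm (Fin n)) (v : Fin n) : ℕ :=
  (Finset.univ.filter fun pq : Fin n × Fin n =>
    RunStartAt π pq.1 ∧ RunEndAt π pq.2 ∧ pq.1 ≤ pq.2 ∧
    (∀ r : Fin n, pq.1 ≤ r → r < pq.2 → ¬ RunEndAt π r) ∧
    π pq.1 < v ∧ v < π pq.2 ∧ pq.2 < π.symm v).card

/-- The map `Γ` from permutations to pairs (bicolored Motzkin path, label sequence). -/
def Gamma {n : ℕ} (π : Equiv.Perm (Fin n)) : List CStep × List ℕ :=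
  (List.ofFn fun v => gammaStep π v, List.ofFn fun v => gammaLabel π v)

/-- The (uncolored) Motzkin path `Γ(π)` for permutations with no boarders:
`U` for heads, `D` for tails, `H` for head-tails. -/
def gammaPath {n : ℕ} (π : Equiv.Perm (Fin n)) : List Step :=
  List.ofFn fun v : Fin n =>
    if RunStartAt π (π.symm v) then
      if RunEndAt π (π.symm v) then Step.H else Step.U
    else
      if RunEndAt π (π.symm v) then Step.D else Step.H

/-- `π` is an involution. -/
def IsInvolution {n : ℕ} (π : Equiv.Perm (Fin n)) : Prop :=
  ∀ x, π (π x) = x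

/-- The Motzkin path `Ψ(π)` of an involution `π`: `H` at fixed points, `U` at the
smaller element of a 2-cycle, `D` at the larger element of a 2-cycle. -/
def psiWord {n : ℕ} (π : Equiv.Perm (Fin n)) : List Step :=
  List.ofFn fun v : Fin n =>
    if π v = v then Step.H else if v < π v then Step.U else Step.D

/-- The label of `Ψ(π)` at `v`: if `v` is the larger element of a 2-cycle
`(π v, v)`, the number of 2-cycles `(x, π x)` with `π v < x < v < π x`; `0` otherwise. -/
def psiLabel {n : ℕ} (π : Equiv.Perm (Fin n)) (v : Fin n) : ℕ :=
  if π v < v then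
    (Finset.univ.filter fun x : Fin n => π v < x ∧ x < v ∧ v < π x).card
  else 0

/-- The map `Ψ` from involutions to labelled Motzkin paths. -/
def Psi {n : ℕ} (π : Equiv.Perm (Fin n)) : List Step × List ℕ :=
  (psiWord π, List.ofFn fun v => psiLabel π v)

/-- Number of inversions of `π`. -/
def invCount {n : ℕ} (π : Equiv.Perm (Fin n)) : ℕ :=
  (Finset.univ.filter fun p : Fin n × Fin n => p.1 < p.2 ∧ π p.2 < π p.1).card

/-- Number of coinversions of `π`. -/
def coinvCount {n : ℕ} (π : Equiv.Perm (Fin n)) : ℕ :=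
  (Finset.univ.filter fun p : Fin n × Fin n => p.1 < p.2 ∧ π p.1 < π p.2).card

/-- Number of descents of `π`. -/
def desCount {n : ℕ} (π : Equiv.Perm (Fin n)) : ℕ :=
  ((Finset.range (n - 1)).filter fun i => pv π (i + 1) < pv π i).card

/-- Number of ascents of `π`. -/
def ascCount {n : ℕ} (π : Equiv.Perm (Fin n)) : ℕ :=
  ((Finset.range (n - 1)).filter fun i => pv π i < pv π (i + 1)).card

/-- Number of fixed points of `π`. -/
def fixCount {n : ℕ} (π : Equiv.Perm (Fin n)) : ℕ :=
  (Finset.univ.filter fun i : Fin n => π i = i).card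

/-- Number of occurrences of the consecutive pattern 123 in `π`. -/
def occC123 {n : ℕ} (π : Equiv.Perm (Fin n)) : ℕ :=
  ((Finset.range (n - 2)).filter fun i =>
    pv π i < pv π (i + 1) ∧ pv π (i + 1) < pv π (i + 2)).card

/-- Number of occurrences of the consecutive pattern 132 in `π`. -/
def occC132 {n : ℕ} (π : Equiv.Perm (Fin n)) : ℕ :=
  ((Finset.range (n - 2)).filter fun i =>
    pv π i < pv π (i + 2) ∧ pv π (i + 2) < pv π (i + 1)).card

/-- Number of occurrences of the consecutive pattern 213 in `π`. -/
def occC213 {n : ℕ} (π : Equiv.Perm (Fin n)) : ℕ :=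
  ((Finset.range (n - 2)).filter fun i =>
    pv π (i + 1) < pv π i ∧ pv π i < pv π (i + 2)).card

/-- Number of occurrences of the consecutive pattern 231 in `π`. -/
def occC231 {n : ℕ} (π : Equiv.Perm (Fin n)) : ℕ :=
  ((Finset.range (n - 2)).filter fun i =>
    pv π (i + 2) < pv π i ∧ pv π i < pv π (i + 1)).card

/-- Number of occurrences of the consecutive pattern 312 in `π`. -/
def occC312 {n : ℕ} (π : Equiv.Perm (Fin n)) : ℕ :=
  ((Finset.range (n - 2)).filter fun i =>
    pv π (i + 1) < pv π (i + 2) ∧ pv π (i + 2) < pv π i).card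

/-- Number of occurrences of the consecutive pattern 321 in `π`. -/
def occC321 {n : ℕ} (π : Equiv.Perm (Fin n)) : ℕ :=
  ((Finset.range (n - 2)).filter fun i =>
    pv π (i + 2) < pv π (i + 1) ∧ pv π (i + 1) < pv π i).card

/-- `π` contains the classical pattern 132. -/
def Contains132 {n : ℕ} (π : Equiv.Perm (Fin n)) : Prop :=
  ∃ i j k : Fin n, i < j ∧ j < k ∧ π i < π k ∧ π k < π j

/-- `π` contains the consecutive pattern 123. -/
def ContainsC123 {n : ℕ} (π : Equiv.Perm (Fin n)) : Prop :=
  ∃ i j k : Fin n, (i : ℕ) + 1 = (j : ℕ) ∧ (j : ℕ) + 1 = (k : ℕ) ∧ π i < π j ∧ π j < π k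

/-- `π` contains the classical pattern 3412. -/
def Contains3412 {n : ℕ} (π : Equiv.Perm (Fin n)) : Prop :=
  ∃ i₁ i₂ i₃ i₄ : Fin n, i₁ < i₂ ∧ i₂ < i₃ ∧ i₃ < i₄ ∧
    π i₃ < π i₄ ∧ π i₄ < π i₁ ∧ π i₁ < π i₂

/-- `π` contains the vincular pattern 1-2̲3̲. -/
def Contains1_23 {n : ℕ} (π : Equiv.Perm (Fin n)) : Prop :=
  ∃ i j k : Fin n, i < j ∧ (j : ℕ) + 1 = (k : ℕ) ∧ π i < π j ∧ π j < π k

/-- `π` contains the vincular pattern 1-3̲2̲. -/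
def Contains1_32 {n : ℕ} (π : Equiv.Perm (Fin n)) : Prop :=
  ∃ i j k : Fin n, i < j ∧ (j : ℕ) + 1 = (k : ℕ) ∧ π i < π k ∧ π k < π j

/-- `w` is the one-line notation of a permutation of `{0, …, n-1}`. -/
def IsPermWord (n : ℕ) (w : List ℕ) : Prop :=
  List.Perm w (List.range n)

/-- Position `p` starts an ascending run of the word `w`. -/
def wRunStart (w : List ℕ) (p : ℕ) : Prop :=
  p = 0 ∨ w.getD p 0 < w.getD (p - 1) 0

/-- Position `p` ends an ascending run of the word `w`. -/
def wRunEnd (w : List ℕ) (p : ℕ) : Prop :=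
  p + 1 = w.length ∨ w.getD (p + 1) 0 < w.getD p 0

/-- The step of `Γ(w)` associated with the value `v`. -/
def wGammaStep (w : List ℕ) (v : ℕ) : CStep :=
  if wRunStart w (w.idxOf v) then
    if wRunEnd w (w.idxOf v) then CStep.H else CStep.U
  else
    if wRunEnd w (w.idxOf v) then CStep.D else CStep.Ht

/-- The label of `Γ(w)` at the value `v`. -/
def wGammaLabel (w : List ℕ) (v : ℕ) : ℕ :=
  ((Finset.range w.length ×ˢ Finset.range w.length).filter fun pq =>
    wRunStart w pq.1 ∧ wRunEnd w pq.2 ∧ pq.1 ≤ pq.2 ∧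
    (∀ r, pq.1 ≤ r → r < pq.2 → ¬ wRunEnd w r) ∧
    w.getD pq.1 0 < v ∧ v < w.getD pq.2 0 ∧ pq.2 < w.idxOf v).card

/-- The map `Γ` on one-line words. -/
def wGamma (w : List ℕ) : List CStep × List ℕ :=
  ((List.range w.length).map (wGammaStep w), (List.range w.length).map (wGammaLabel w))

/-- The word `w` contains the vincular pattern 1-2̲3̲. -/
def wContains1_23 (w : List ℕ) : Prop :=
  ∃ i j, i < j ∧ j + 1 < w.length ∧
    w.getD i 0 < w.getD j 0 ∧ w.getD j 0 < w.getD (j + 1) 0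

/-- The word `w` contains the vincular pattern 1-3̲2̲. -/
def wContains1_32 (w : List ℕ) : Prop :=
  ∃ i j, i < j ∧ j + 1 < w.length ∧
    w.getD i 0 < w.getD (j + 1) 0 ∧ w.getD (j + 1) 0 < w.getD j 0

/-- The word `w` contains the classical pattern 132. -/
def wContains132 (w : List ℕ) : Prop :=
  ∃ i j k, i < j ∧ j < k ∧ k < w.length ∧
    w.getD i 0 < w.getD k 0 ∧ w.getD k 0 < w.getD j 0

/-- The word `w` contains the consecutive pattern 123. -/
def wContainsC123 (w : List ℕ) : Prop :=
  ∃ i, i + 2 < w.length ∧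
    w.getD i 0 < w.getD (i + 1) 0 ∧ w.getD (i + 1) 0 < w.getD (i + 2) 0

/-- The one-line word of the Foata image `F(π)` of an involution `π`: write `π` in
standard cycle notation (each cycle with its least element first, cycles in
decreasing order of their least elements) and erase the parentheses. -/
def foataWord {n : ℕ} (π : Equiv.Perm (Fin n)) : List ℕ :=
  (((List.range n).reverse).map fun m =>
    if pv π m = m then [m]
    else if m < pv π m then [m, pv π m]
    else ([] : List ℕ)).flatten

/-- The number of long tunnels of `d`: occurrences of factors `U α D` with `α` a
nonempty Motzkin word. -/
def longTunnelCount (d : List Step) : ℕ :=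
  ((Finset.range d.length ×ˢ Finset.range d.length).filter fun ij =>
    ij.1 + 1 < ij.2 ∧ d.getD ij.1 Step.H = Step.U ∧ d.getD ij.2 Step.H = Step.D ∧
    IsMotzkin ((d.drop (ij.1 + 1)).take (ij.2 - ij.1 - 1))).card

/-- The number of weak valleys of `d`: occurrences of the factors `HH, HU, DH, DU`. -/
def weakValleyCount (d : List Step) : ℕ :=
  occFactor [Step.H, Step.H] d + occFactor [Step.H, Step.U] d +
  occFactor [Step.D, Step.H] d + occFactor [Step.D, Step.U] d

end


section AuxProof

variable {n : ℕ} (π : Equiv.Perm (Fin n))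

lemma pv_def {j : ℕ} (h : j < n) : pv π j = (π ⟨j, h⟩ : Fin n).val := by
  simp [pv, h]

lemma pv_lt {j : ℕ} (h : j < n) : pv π j < n := by
  rw [pv_def π h]; exact (π ⟨j, h⟩).isLt

lemma pv_pv (h₁ : IsInvolution π) {j : ℕ} (h : j < n) : pv π (pv π j) = j := by
  rw [pv_def π (pv_lt π h)]
  have he : (⟨pv π j, pv_lt π h⟩ : Fin n) = π ⟨j, h⟩ := Fin.ext (pv_def π h)
  rw [he, h₁]

lemma mk3412 {p q r s : ℕ} (hp : p < n) (hq : q < n) (hr : r < n) (hs : s < n)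
    (hpq : p < q) (hqr : q < r) (hrs : r < s)
    (h1 : pv π r < pv π s) (h2 : pv π s < pv π p) (h3 : pv π p < pv π q) :
    Contains3412 π := by
  rw [pv_def π hr, pv_def π hs] at h1
  rw [pv_def π hs, pv_def π hp] at h2
  rw [pv_def π hp, pv_def π hq] at h3
  exact ⟨⟨p, hp⟩, ⟨q, hq⟩, ⟨r, hr⟩, ⟨s, hs⟩, hpq, hqr, hrs, h1, h2, h3⟩

lemma key (h₁ : IsInvolution π) (h₂ : ¬ Contains3412 π) (i : ℕ) (hi : i + 1 < n) :
    (pv π i ≤ i ∧ i + 1 < pv π (i + 1)) ↔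
      (i + 2 < n ∧ pv π i < pv π (i + 2) ∧ pv π (i + 2) < pv π (i + 1)) := by
  have hin : i < n := by omega
  have hπa : pv π (pv π i) = i := pv_pv π h₁ hin
  have hπb : pv π (pv π (i + 1)) = i + 1 := pv_pv π h₁ hi
  have han : pv π i < n := pv_lt π hin
  have hbn : pv π (i + 1) < n := pv_lt π hi
  constructor
  · rintro ⟨ha, hb⟩
    have hn2 : i + 2 < n := by omega
    have hcn : pv π (i + 2) < n := pv_lt π hn2
    have hπc : pv π (pv π (i + 2)) = i + 2 := pv_pv π h₁ hn2
    by_cases hb2 : pv π (i + 1) = i + 2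
    · have hc : pv π (i + 2) = i + 1 := by rw [← hb2]; exact hπb
      exact ⟨hn2, by omega, by omega⟩
    · have hb3 : i + 2 < pv π (i + 1) := by omega
      have hcb : pv π (i + 2) ≠ pv π (i + 1) := by
        intro h
        rw [h, hπb] at hπc
        omega
      have hc_lt_b : pv π (i + 2) < pv π (i + 1) := by
        by_contra hcont
        push_neg at hcont
        have hlt : pv π (i + 1) < pv π (i + 2) := lt_of_le_of_ne hcont (Ne.symm hcb)
        exact h₂ (mk3412 π hi hn2 hbn hcn (by omega) hb3 hlt
          (by rw [hπb]; omega) (by rw [hπc]; exact hb3) hlt)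
      have hac : pv π i < pv π (i + 2) := by
        by_contra hcont
        push_neg at hcont
        have hca : pv π (i + 2) ≠ pv π i := by
          intro h
          rw [h, hπa] at hπc
          omega
        have hlt : pv π (i + 2) < pv π i := lt_of_le_of_ne hcont hca
        have hci : pv π (i + 2) < i + 1 := by omega
        exact h₂ (mk3412 π hcn hi hn2 hbn hci (by omega) hb3
          (by rw [hπb]; exact hci) (by rw [hπc]; omega) (by rw [hπc]; exact hb3))
      exact ⟨hn2, hac, hc_lt_b⟩
  · rintro ⟨hn2, hac, hcb⟩
    have hcn : pv π (i + 2) < n := pv_lt π hn2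
    have hπc : pv π (pv π (i + 2)) = i + 2 := pv_pv π h₁ hn2
    have hb_gt : i + 1 < pv π (i + 1) := by
      by_contra hcont
      push_neg at hcont
      by_cases hEq : pv π (i + 1) = i + 1
      · -- b = i + 1 : c < i
        have hci : pv π (i + 2) < i := by
          rcases Nat.lt_or_ge (pv π (i + 2)) i with h | h
          · exact h
          · exfalso
            have : pv π (i + 2) = i ∨ pv π (i + 2) = i + 1 ∨ pv π (i + 2) = i + 2 ∨
                i + 2 < pv π (i + 2) := by omega
            rcases this with h' | h' | h' | h'
            · rw [h'] at hπc; omega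
            · rw [h'] at hπc; rw [hπc] at hEq; omega
            · omega
            · omega
        exact h₂ (mk3412 π han hcn hin hn2 (by omega) hci (by omega)
          hac (by rw [hπa]; omega) (by rw [hπa, hπc]; omega))
      · -- b < i + 1, so b ≤ i, and b ≠ i
        have hble : pv π (i + 1) ≤ i := by omega
        have hbni : pv π (i + 1) ≠ i := by
          intro h
          rw [h] at hπb
          omega
        have hbi : pv π (i + 1) < i := by omega
        exact h₂ (mk3412 π han hcn hin hi (by omega) (by omega) (by omega)
          (by omega) (by rw [hπa]; omega) (by rw [hπa, hπc]; omega))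
    have ha_le : pv π i ≤ i := by
      by_contra hcont
      push_neg at hcont
      have hani : pv π i ≠ i + 1 := by
        intro h
        rw [h] at hπa
        omega
      have hia : i + 1 < pv π i := by omega
      exact h₂ (mk3412 π hin hi han hbn (by omega) hia (by omega)
        (by rw [hπa, hπb]; omega) (by rw [hπb]; exact hia) (by omega))
    exact ⟨ha_le, hb_gt⟩

lemma prefix2_iff (l : List Step) (i : ℕ) (a b : Step) :
    [a, b] <+: l.drop i ↔
      i + 1 < l.length ∧ l.getD i Step.H = a ∧ l.getD (i + 1) Step.H = b := by
  constructor
  · rintro ⟨t, ht⟩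
    have ht' : l.drop i = a :: b :: t := ht.symm
    have hlen : i + 1 < l.length := by
      have h := congrArg List.length ht'
      simp [List.length_drop] at h
      omega
    have h0 : l[i]? = some a := by
      have h : (l.drop i)[0]? = l[i + 0]? := List.getElem?_drop
      rw [ht'] at h
      simpa using h.symm
    have h1 : l[i + 1]? = some b := by
      have h : (l.drop i)[1]? = l[i + 1]? := List.getElem?_drop
      rw [ht'] at h
      simpa using h.symm
    refine ⟨hlen, ?_, ?_⟩
    · simp [List.getD_eq_getElem?_getD, h0]
    · simp [List.getD_eq_getElem?_getD, h1]
  · rintro ⟨hlen, ha, hb⟩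
    have hi : i < l.length := by omega
    rw [List.getD_eq_getElem l _ hi] at ha
    rw [List.getD_eq_getElem l _ hlen] at hb
    refine ⟨l.drop (i + 2), ?_⟩
    rw [List.drop_eq_getElem_cons hi, List.drop_eq_getElem_cons hlen, ha, hb]
    rfl

lemma psiWord_length : (psiWord π).length = n := by simp [psiWord]

lemma psiWord_getD {j : ℕ} (h : j < n) :
    (psiWord π).getD j Step.H =
      if pv π j = j then Step.H else if j < pv π j then Step.U else Step.D := by
  have h' : j < (psiWord π).length := by rw [psiWord_length]; exact h
  rw [List.getD_eq_getElem _ _ h']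
  simp only [psiWord, List.getElem_ofFn]
  rw [pv_def π h]
  simp only [Fin.ext_iff, Fin.lt_def]

lemma psiWord_U {j : ℕ} (h : j < n) :
    (psiWord π).getD j Step.H = Step.U ↔ j < pv π j := by
  rw [psiWord_getD π h]
  split_ifs with h1 h2 <;> simp_all

lemma psiWord_D {j : ℕ} (h : j < n) :
    (psiWord π).getD j Step.H = Step.D ↔ pv π j < j := by
  rw [psiWord_getD π h]
  split_ifs with h1 h2 <;> simp_all <;> omega

lemma psiWord_H {j : ℕ} (h : j < n) :
    (psiWord π).getD j Step.H = Step.H ↔ pv π j = j := by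
  rw [psiWord_getD π h]
  split_ifs with h1 h2 <;> simp_all

end AuxProof

/-- For `π ∈ I_n(3412)`: the number of occurrences of the
consecutive pattern 132 in `π` equals the total number of occurrences in `Ψ(π)` of
the factors `DU` and `HU`. -/
theorem occC132_eq_factors (n : ℕ) (π : Equiv.Perm (Fin n))
    (h₁ : IsInvolution π) (h₂ : ¬ Contains3412 π) :
    occC132 π =
      occFactor [Step.D, Step.U] (psiWord π) +
      occFactor [Step.H, Step.U] (psiWord π) := by
  classical
  set w := psiWord π with hw
  have hwl : w.length = n := psiWord_length π
  have hDU : ∀ i, ([Step.D, Step.U] <+: w.drop i) ↔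
      (i + 1 < n ∧ pv π i < i ∧ i + 1 < pv π (i + 1)) := by
    intro i
    rw [prefix2_iff, hwl]
    constructor
    · rintro ⟨h1, h2, h3⟩
      exact ⟨h1, (psiWord_D π (by omega)).mp h2, (psiWord_U π h1).mp h3⟩
    · rintro ⟨h1, h2, h3⟩
      exact ⟨h1, (psiWord_D π (by omega)).mpr h2, (psiWord_U π h1).mpr h3⟩
  have hHU : ∀ i, ([Step.H, Step.U] <+: w.drop i) ↔
      (i + 1 < n ∧ pv π i = i ∧ i + 1 < pv π (i + 1)) := by
    intro i
    rw [prefix2_iff, hwl]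
    constructor
    · rintro ⟨h1, h2, h3⟩
      exact ⟨h1, (psiWord_H π (by omega)).mp h2, (psiWord_U π h1).mp h3⟩
    · rintro ⟨h1, h2, h3⟩
      exact ⟨h1, (psiWord_H π (by omega)).mpr h2, (psiWord_U π h1).mpr h3⟩
  have main : ∀ i, (([Step.D, Step.U] <+: w.drop i) ∨ ([Step.H, Step.U] <+: w.drop i))
      ↔ (i + 2 < n ∧ pv π i < pv π (i + 2) ∧ pv π (i + 2) < pv π (i + 1)) := by
    intro i
    by_cases hi : i + 1 < n
    · rw [hDU i, hHU i, ← key π h₁ h₂ i hi]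
      constructor
      · rintro (⟨_, h, h'⟩ | ⟨_, h, h'⟩)
        · exact ⟨le_of_lt h, h'⟩
        · exact ⟨le_of_eq h, h'⟩
      · rintro ⟨hle, h'⟩
        rcases lt_or_eq_of_le hle with h | h
        · exact Or.inl ⟨hi, h, h'⟩
        · exact Or.inr ⟨hi, h, h'⟩
    · constructor
      · rintro (h | h)
        · exact absurd ((hDU i).mp h).1 hi
        · exact absurd ((hHU i).mp h).1 hi
      · rintro ⟨h2, -, -⟩
        exact absurd (by omega : i + 1 < n) hi
  have hdisj : Disjoint
      ((Finset.range n).filter fun i => [Step.D, Step.U] <+: w.drop i)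
      ((Finset.range n).filter fun i => [Step.H, Step.U] <+: w.drop i) := by
    rw [Finset.disjoint_left]
    intro i hi1 hi2
    rw [Finset.mem_filter] at hi1 hi2
    have h1 := ((hDU i).mp hi1.2).2.1
    have h2 := ((hHU i).mp hi2.2).2.1
    omega
  have hsum : occFactor [Step.D, Step.U] w + occFactor [Step.H, Step.U] w
      = ((Finset.range n).filter fun i =>
        i + 2 < n ∧ pv π i < pv π (i + 2) ∧ pv π (i + 2) < pv π (i + 1)).card := by
    rw [occFactor, occFactor, hwl, ← Finset.card_union_of_disjoint hdisj]
    congr 1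
    ext i
    simp only [Finset.mem_union, Finset.mem_filter, Finset.mem_range]
    constructor
    · rintro (⟨h, h'⟩ | ⟨h, h'⟩)
      · exact ⟨h, (main i).mp (Or.inl h')⟩
      · exact ⟨h, (main i).mp (Or.inr h')⟩
    · rintro ⟨h, h'⟩
      rcases (main i).mpr h' with h'' | h''
      · exact Or.inl ⟨h, h''⟩
      · exact Or.inr ⟨h, h''⟩
  rw [hsum, occC132]
  congr 1
  ext i
  simp only [Finset.mem_filter, Finset.mem_range]
  constructor
  · rintro ⟨h, h2⟩
    exact ⟨by omega, by omega, h2⟩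
  · rintro ⟨h, h2, h3⟩
    exact ⟨by omega, h3⟩
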